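/- (Cauchy point decrease) Let m(s) = c + g^T s + (1/2) s^T B^T B s with g ≠ 0, B invertible with ||B|| ≤ ν, and Δ > 0. Define p^C = -min{||g||²/(g^T B^T B g), Δ/||g||} g. Then m(0) - m(p^C) ≥ (||g||/2) · min{Δ, ||g||/ν²}. -/

import Mathlib

open Matrix

/-- Euclidean norm of a real vector. -/
noncomputable def vNorm {ι : Type*} [Fintype ι] (v : ι → ℝ) : ℝ :=
  Real.sqrt (v ⬝ᵥ v)

/-- Operator (spectral) norm of a real square matrix. -/
noncomputable def opNorm {ι : Type*} [Fintype ι] [DecidableEq ι]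
    (M : Matrix ι ι ℝ) : ℝ :=
  ‖Matrix.toEuclideanCLM (𝕜 := ℝ) M‖


lemma vNorm_eq_norm {d : ℕ} (v : Fin d → ℝ) :
    vNorm v = ‖(WithLp.equiv 2 (Fin d → ℝ)).symm v‖ := by
  rw [vNorm, EuclideanSpace.norm_eq]
  congr 1
  simp [dotProduct, sq, Real.norm_eq_abs, abs_mul_abs_self]

lemma vNorm_nonneg {d : ℕ} (v : Fin d → ℝ) : 0 ≤ vNorm v := Real.sqrt_nonneg _

lemma vNorm_sq {d : ℕ} (v : Fin d → ℝ) : vNorm v ^ 2 = v ⬝ᵥ v := by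
  rw [vNorm, Real.sq_sqrt]
  exact Finset.sum_nonneg fun i _ => mul_self_nonneg _

lemma vNorm_mulVec_le {d : ℕ} (M : Matrix (Fin d) (Fin d) ℝ) (v : Fin d → ℝ) :
    vNorm (M *ᵥ v) ≤ opNorm M * vNorm v := by
  have h := (Matrix.toEuclideanCLM (𝕜 := ℝ) M).le_opNorm ((WithLp.equiv 2 (Fin d → ℝ)).symm v)
  rw [vNorm_eq_norm, vNorm_eq_norm]
  exact h

/-- Cauchy point decrease. -/
theorem stmt_17 (d : ℕ) (c Δ ν : ℝ) (hΔ : 0 < Δ) (g : Fin d → ℝ) (hg : g ≠ 0)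
    (B : Matrix (Fin d) (Fin d) ℝ) (hB : IsUnit B) (hν : opNorm B ≤ ν) :
    let mq : (Fin d → ℝ) → ℝ :=
      fun s => c + g ⬝ᵥ s + (1 / 2) * (s ⬝ᵥ (Bᵀ * B).mulVec s)
    let pC : Fin d → ℝ :=
      -((min ((g ⬝ᵥ g) / (g ⬝ᵥ (Bᵀ * B).mulVec g)) (Δ / vNorm g)) • g)
    mq 0 - mq pC ≥ (vNorm g / 2) * min Δ (vNorm g / ν ^ 2) := by
  intro mq pC
  set a : ℝ := g ⬝ᵥ g with ha
  set b : ℝ := g ⬝ᵥ (Bᵀ * B).mulVec g with hb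
  set n : ℝ := vNorm g with hn
  -- basic facts
  have hBg : B *ᵥ g ≠ 0 := by
    intro h
    apply hg
    have hdet : IsUnit B.det := (Matrix.isUnit_iff_isUnit_det B).mp hB
    have : B⁻¹ *ᵥ (B *ᵥ g) = g := by
      rw [Matrix.mulVec_mulVec, Matrix.nonsing_inv_mul B hdet, Matrix.one_mulVec]
    rw [h, Matrix.mulVec_zero] at this
    exact this.symm
  have hbeq : b = (B *ᵥ g) ⬝ᵥ (B *ᵥ g) := by
    rw [hb, ← Matrix.mulVec_mulVec, Matrix.dotProduct_mulVec, Matrix.vecMul_transpose]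
  have hbpos : 0 < b := by
    rw [hbeq]
    have h1 : 0 ≤ (B *ᵥ g) ⬝ᵥ (B *ᵥ g) :=
      Finset.sum_nonneg fun i _ => mul_self_nonneg _
    rcases h1.lt_or_eq with h | h
    · exact h
    · exact absurd ((dotProduct_self_eq_zero).mp h.symm) hBg
  have hapos : 0 < a := by
    have h1 : 0 ≤ a := Finset.sum_nonneg fun i _ => mul_self_nonneg _
    rcases h1.lt_or_eq with h | h
    · exact h
    · exact absurd ((dotProduct_self_eq_zero).mp h.symm) hg
  have hnsq : n ^ 2 = a := vNorm_sq g
  have hnpos : 0 < n := by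
    rw [hn, vNorm]; exact Real.sqrt_pos.mpr hapos
  have hνpos : 0 < ν := by
    have h1 : 0 < vNorm (B *ᵥ g) := by
      rw [vNorm]; exact Real.sqrt_pos.mpr (hbeq ▸ hbpos)
    have h2 := vNorm_mulVec_le B g
    nlinarith [h1, h2, hν, hnpos]
  have hbound : b ≤ ν ^ 2 * a := by
    have h2 := vNorm_mulVec_le B g
    have h3 : vNorm (B *ᵥ g) ≤ ν * n := le_trans h2 (by
      have := vNorm_nonneg g
      nlinarith)
    have h4 : vNorm (B *ᵥ g) ^ 2 = b := by rw [vNorm_sq, hbeq]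
    nlinarith [vNorm_nonneg (B *ᵥ g)]
  -- expand the model decrease
  set t : ℝ := min (a / b) (Δ / n) with ht
  have hexp : mq 0 - mq pC = t * a - t ^ 2 * b / 2 := by
    show (c + g ⬝ᵥ 0 + (1 / 2) * ((0 : Fin d → ℝ) ⬝ᵥ (Bᵀ * B).mulVec 0))
        - (c + g ⬝ᵥ (-(t • g)) + (1 / 2) * ((-(t • g)) ⬝ᵥ (Bᵀ * B).mulVec (-(t • g)))) = _
    simp [Matrix.mulVec_zero, dotProduct_zero, dotProduct_neg,
      neg_dotProduct, Matrix.mulVec_neg, Matrix.mulVec_smul,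
      dotProduct_smul, smul_dotProduct, smul_eq_mul, ← ha, ← hb]
    ring
  rw [hexp, ge_iff_le]
  -- case analysis
  rcases min_cases (a / b) (Δ / n) with ⟨h1, h2⟩ | ⟨h1, h2⟩
  · -- t = a/b
    have hD : t * a - t ^ 2 * b / 2 = a ^ 2 / (2 * b) := by
      rw [ht, h1]; field_simp; ring
    rw [hD]
    have hmin : min Δ (n / ν ^ 2) ≤ n / ν ^ 2 := min_le_right _ _
    have key : n / 2 * (n / ν ^ 2) ≤ a ^ 2 / (2 * b) := by
      rw [div_mul_div_comm, div_le_div_iff₀ (by positivity) (by positivity)]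
      nlinarith
    calc n / 2 * min Δ (n / ν ^ 2) ≤ n / 2 * (n / ν ^ 2) := by
          apply mul_le_mul_of_nonneg_left hmin (by positivity)
      _ ≤ a ^ 2 / (2 * b) := key
  · -- t = Δ/n
    have htb : t * b ≤ a := by
      rw [ht, h1]
      have h2' : Δ / n ≤ a / b := le_of_lt h2
      rw [div_le_div_iff₀ hnpos hbpos] at h2'
      rw [div_mul_eq_mul_div, div_le_iff₀ hnpos]
      nlinarith
    have hta : t * a = Δ * n := by
      rw [ht, h1, ← hnsq]; field_simp
    have hmin : min Δ (n / ν ^ 2) ≤ Δ := min_le_left _ _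
    have htpos : 0 ≤ t := by rw [ht, h1]; positivity
    calc n / 2 * min Δ (n / ν ^ 2) ≤ n / 2 * Δ := by
          apply mul_le_mul_of_nonneg_left hmin (by positivity)
      _ = t * a / 2 := by rw [hta]; ring
      _ ≤ t * a - t ^ 2 * b / 2 := by nlinarith
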